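/- Let C ≥ 2 divide k, and suppose the collection (μ_1, …, μ_k) consists of C blocks of k/C identical measures, i.e. there are probability measures ν_1, …, ν_C on X such that μ_i = ν_c whenever i lies in the c-th block of k/C consecutive indices. Then MOT(μ_1,…,μ_k) = MOT(ν_1,…,ν_C), the multimarginal optimal transport value for the C-measure collection with the corresponding variance cost. In particular, for C = 2 (so μ_1 = ⋯ = μ_{k/2} = ν_1 and μ_{k/2+1} = ⋯ = μ_k = ν_2), MOT(μ_1,…,μ_k) = (1/4)·W₂²(ν_1, ν_2). -/

import Mathlib

open scoped BigOperators RealInnerProductSpace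
open Finset Pointwise

/-- The variance cost of the tuple `(x_{t 1}, …, x_{t k})`. -/
noncomputable def motCost {d k N : ℕ} (x : Fin N → EuclideanSpace ℝ (Fin d))
    (t : Fin k → Fin N) : ℝ :=
  (k : ℝ)⁻¹ * ∑ i, ‖x (t i) - (k : ℝ)⁻¹ • ∑ m, x (t m)‖ ^ 2

/-- A probability measure on a finite set with `N` points. -/
def IsProbVec {N : ℕ} (μ : Fin N → ℝ) : Prop :=
  (∀ j, 0 ≤ μ j) ∧ ∑ j, μ j = 1

/-- A multicoupling of `(μ_1,…,μ_k)`. -/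
def IsMulticoupling {k N : ℕ} (μ : Fin k → Fin N → ℝ)
    (π : (Fin k → Fin N) → ℝ) : Prop :=
  (∀ t, 0 ≤ π t) ∧ (∑ t, π t = 1) ∧
    ∀ (i : Fin k) (j : Fin N),
      ∑ t ∈ Finset.univ.filter (fun t : Fin k → Fin N => t i = j), π t = μ i j

/-- The optimal value of the multimarginal optimal transport program. -/
noncomputable def MOT {d k N : ℕ} (x : Fin N → EuclideanSpace ℝ (Fin d))
    (μ : Fin k → Fin N → ℝ) : ℝ :=
  sInf {v | ∃ π, IsMulticoupling μ π ∧ v = ∑ t, motCost x t * π t}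

/-- The squared 2-Wasserstein distance between two measures on `X`. -/
noncomputable def W2sq {d N : ℕ} (x : Fin N → EuclideanSpace ℝ (Fin d))
    (α β : Fin N → ℝ) : ℝ :=
  sInf {v | ∃ γ : Fin N → Fin N → ℝ,
    (∀ j l, 0 ≤ γ j l) ∧ (∑ j, ∑ l, γ j l = 1) ∧
    (∀ j, ∑ l, γ j l = α j) ∧ (∀ l, ∑ j, γ j l = β l) ∧
    v = ∑ j, ∑ l, ‖x j - x l‖ ^ 2 * γ j l}

lemma motCost_nonneg {d k N : ℕ} (x : Fin N → EuclideanSpace ℝ (Fin d))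
    (t : Fin k → Fin N) : 0 ≤ motCost x t := by
  unfold motCost; positivity

lemma sq_norm_sum_le {E : Type*} [SeminormedAddCommGroup E] {ι : Type*} [Fintype ι]
    (v : ι → E) : ‖∑ i, v i‖ ^ 2 ≤ (Fintype.card ι : ℝ) * ∑ i, ‖v i‖ ^ 2 := by
  calc ‖∑ i, v i‖ ^ 2 ≤ (∑ i, ‖v i‖) ^ 2 := by
        have := norm_sum_le Finset.univ v
        exact pow_le_pow_left₀ (norm_nonneg _) this 2
    _ ≤ (Fintype.card ι : ℝ) * ∑ i, ‖v i‖ ^ 2 := by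
        simpa using sq_sum_le_card_mul_sum_sq (s := Finset.univ) (f := fun i => ‖v i‖)

lemma motCost_eq {d k N : ℕ} (hk : 0 < k) (x : Fin N → EuclideanSpace ℝ (Fin d))
    (t : Fin k → Fin N) :
    motCost x t = (k : ℝ)⁻¹ * ∑ i, ‖x (t i)‖ ^ 2
      - ‖(k : ℝ)⁻¹ • ∑ m, x (t m)‖ ^ 2 := by
  have hk' : (k : ℝ) ≠ 0 := Nat.cast_ne_zero.mpr hk.ne'
  set b := (k : ℝ)⁻¹ • ∑ m, x (t m) with hb
  have hsum : ∑ m, x (t m) = (k : ℝ) • b := by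
    rw [hb, smul_smul, mul_inv_cancel₀ hk', one_smul]
  have hexp : ∀ i : Fin k, ‖x (t i) - b‖ ^ 2
      = ‖x (t i)‖ ^ 2 - 2 * ⟪x (t i), b⟫ + ‖b‖ ^ 2 := fun i => norm_sub_sq_real _ _
  unfold motCost
  rw [← hb, Finset.sum_congr rfl fun i _ => hexp i]
  rw [Finset.sum_add_distrib, Finset.sum_sub_distrib, ← Finset.mul_sum, ← sum_inner, hsum,
    real_inner_smul_left, real_inner_self_eq_norm_sq, Finset.sum_const, Finset.card_univ,
    Fintype.card_fin, nsmul_eq_mul]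
  field_simp
  ring

def blockOf {C m : ℕ} (i : Fin (C * m)) : Fin C :=
  ⟨(i : ℕ) / m, by
    rcases Nat.eq_zero_or_pos m with h | h
    · exact absurd i.isLt (by simp [h])
    · exact (Nat.div_lt_iff_lt_mul h).mpr i.isLt⟩

def embB {C m : ℕ} (c : Fin C) (j : Fin m) : Fin (C * m) :=
  ⟨(c : ℕ) * m + j, by
    have h1 := c.isLt
    have h2 := j.isLt
    nlinarith⟩

lemma blockOf_embB {C m : ℕ} (c : Fin C) (j : Fin m) : blockOf (embB c j) = c := by
  have hm : 0 < m := lt_of_le_of_lt (Nat.zero_le _) j.isLt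
  apply Fin.ext
  show ((c : ℕ) * m + j) / m = c
  rw [Nat.add_comm, Nat.mul_comm, Nat.add_mul_div_left _ _ hm, Nat.div_eq_of_lt j.isLt,
    Nat.zero_add]

lemma embB_bijective {C m : ℕ} :
    Function.Bijective (fun p : Fin C × Fin m => embB p.1 p.2) := by
  rw [Fintype.bijective_iff_injective_and_card]
  refine ⟨fun p q h => ?_, by simp⟩
  have h' : (p.1 : ℕ) * m + p.2 = (q.1 : ℕ) * m + q.2 := by
    simpa [embB] using congrArg Fin.val h
  have h1 : p.1 = q.1 := by
    have := congrArg blockOf h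
    rwa [blockOf_embB, blockOf_embB] at this
  have h1' : (p.1 : ℕ) = q.1 := congrArg Fin.val h1
  rw [h1'] at h'
  exact Prod.ext h1 (Fin.ext (by omega))

lemma sum_embB {C m : ℕ} {β : Type*} [AddCommMonoid β] (g : Fin (C * m) → β) :
    ∑ i, g i = ∑ c, ∑ j, g (embB c j) := by
  have h := Fintype.sum_bijective _ (embB_bijective (C := C) (m := m))
    (fun p : Fin C × Fin m => g (embB p.1 p.2)) g (fun p => rfl)
  rw [← h, Fintype.sum_prod_type]

lemma sum_eval {C m : ℕ} {β : Type*} [AddCommMonoid β] (c : Fin C) (g : Fin m → β) :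
    ∑ f : Fin C → Fin m, g (f c) = m ^ (C - 1) • ∑ j, g j := by
  rw [Fintype.sum_equiv (Equiv.piSplitAt c (fun _ => Fin m))
    (fun f => g (f c)) (fun p => g p.1) (fun f => rfl)]
  have hcard : Fintype.card ({ j : Fin C // j ≠ c } → Fin m) = m ^ (C - 1) := by
    rw [Fintype.card_fun, Fintype.card_fin]
    congr 1
    simp [Ne, Fintype.card_subtype_compl]
  rw [Fintype.sum_prod_type]
  simp only [Finset.sum_const, Finset.card_univ]
  rw [← Finset.smul_sum, hcard]

lemma avg_lift {C m : ℕ} {β : Type*} [AddCommMonoid β] [Module ℝ β]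
    (hC : 0 < C) (hm : 0 < m) (g : Fin C → β) :
    ((C * m : ℕ) : ℝ)⁻¹ • ∑ i : Fin (C * m), g (blockOf i)
      = (C : ℝ)⁻¹ • ∑ c, g c := by
  rw [sum_embB (fun i => g (blockOf i))]
  simp only [blockOf_embB]
  rw [Finset.sum_congr rfl (fun c _ => Finset.sum_const (g c)), Finset.card_univ,
    Fintype.card_fin, ← Finset.smul_sum, ← Nat.cast_smul_eq_nsmul ℝ m, smul_smul]
  congr 1
  have hC' : (C : ℝ) ≠ 0 := Nat.cast_ne_zero.mpr hC.ne'
  have hm' : (m : ℝ) ≠ 0 := Nat.cast_ne_zero.mpr hm.ne'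
  push_cast
  field_simp

lemma motCost_lift {d C m N : ℕ} (hC : 0 < C) (hm : 0 < m)
    (x : Fin N → EuclideanSpace ℝ (Fin d)) (s : Fin C → Fin N) :
    motCost x (fun i : Fin (C * m) => s (blockOf i)) = motCost x s := by
  have hb : ((C * m : ℕ) : ℝ)⁻¹ • ∑ i : Fin (C * m), x (s (blockOf i))
      = (C : ℝ)⁻¹ • ∑ c, x (s c) := avg_lift (β := EuclideanSpace ℝ (Fin d)) hC hm (fun c => x (s c))
  unfold motCost
  rw [hb]
  have := avg_lift (β := ℝ) hC hm (fun c => ‖x (s c) - (C : ℝ)⁻¹ • ∑ c, x (s c)‖ ^ 2)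
  simpa [smul_eq_mul] using this

lemma avg_cost_le {d C m N : ℕ} (hC : 0 < C) (hm : 0 < m)
    (x : Fin N → EuclideanSpace ℝ (Fin d)) (t : Fin (C * m) → Fin N) :
    ∑ f : Fin C → Fin m, motCost x (fun c => t (embB c (f c)))
      ≤ ((m : ℝ) ^ C) * motCost x t := by
  have hCm : 0 < C * m := Nat.mul_pos hC hm
  have hC' : (0:ℝ) < C := by exact_mod_cast hC
  have hm' : (0:ℝ) < m := by exact_mod_cast hm
  have hMC : (m:ℝ) ^ C = (m:ℝ) ^ (C-1) * m := by
    conv_lhs => rw [show C = (C-1)+1 by omega]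
    rw [pow_succ]
  have h1 : ∑ f : Fin C → Fin m, (∑ c, ‖x (t (embB c (f c)))‖ ^ 2)
      = ((m ^ (C - 1) : ℕ) : ℝ) * ∑ i, ‖x (t i)‖ ^ 2 := by
    rw [Finset.sum_comm,
      Finset.sum_congr rfl fun c _ => sum_eval c (fun j => ‖x (t (embB c j))‖ ^ 2),
      ← Finset.smul_sum, ← sum_embB (fun i => ‖x (t i)‖ ^ 2), nsmul_eq_mul]
  have h2 : ∑ f : Fin C → Fin m, (∑ c, x (t (embB c (f c))))
      = ((m ^ (C - 1) : ℕ) : ℝ) • ∑ i, x (t i) := by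
    rw [Finset.sum_comm,
      Finset.sum_congr rfl fun c _ => sum_eval c (fun j => x (t (embB c j))),
      ← Finset.smul_sum, ← sum_embB (fun i => x (t i)), Nat.cast_smul_eq_nsmul]
  have hJ := sq_norm_sum_le (fun f : Fin C → Fin m => (C : ℝ)⁻¹ • ∑ c, x (t (embB c (f c))))
  rw [Fintype.card_fun, Fintype.card_fin, Fintype.card_fin] at hJ
  have hbsum : ∑ f : Fin C → Fin m, (C : ℝ)⁻¹ • ∑ c, x (t (embB c (f c)))
      = ((C : ℝ)⁻¹ * ((m ^ (C-1) : ℕ) : ℝ)) • ∑ i, x (t i) := by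
    rw [← Finset.smul_sum, h2, smul_smul]
  rw [hbsum, norm_smul, Real.norm_eq_abs, mul_pow, sq_abs] at hJ
  -- rewrite LHS of goal
  rw [Finset.sum_congr rfl fun f _ => motCost_eq hC x (fun c => t (embB c (f c))),
    Finset.sum_sub_distrib, ← Finset.mul_sum, h1, motCost_eq hCm x t]
  rw [norm_smul, Real.norm_eq_abs, abs_of_nonneg (by positivity), mul_pow]
  push_cast at hJ ⊢
  set A := ∑ i, ‖x (t i)‖ ^ 2
  set nS := ‖∑ i, x (t i)‖ ^ 2 with hnS
  set T := ∑ f : Fin C → Fin m, ‖(C : ℝ)⁻¹ • ∑ c, x (t (embB c (f c)))‖ ^ 2 with hT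
  have hnS0 : 0 ≤ nS := by rw [hnS]; positivity
  have hpow : (0:ℝ) < (m:ℝ) ^ C := by positivity
  have hA : (C:ℝ)⁻¹ * (m:ℝ)^(C-1) = (m:ℝ)^C * ((C:ℝ)*(m:ℝ))⁻¹ := by
    rw [hMC]; field_simp
  have key : (m:ℝ)^C * (((C:ℝ)*(m:ℝ))⁻¹)^2 * nS ≤ T := by
    rw [← mul_le_mul_iff_right₀ hpow]
    calc (m:ℝ)^C * ((m:ℝ)^C * (((C:ℝ)*(m:ℝ))⁻¹)^2 * nS)
        = ((C:ℝ)⁻¹ * (m:ℝ)^(C-1))^2 * nS := by rw [hMC]; field_simp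
      _ ≤ (m:ℝ)^C * T := hJ
  have expand : (m:ℝ)^C * (((C:ℝ)*(m:ℝ))⁻¹ * A - (((C:ℝ)*(m:ℝ))⁻¹)^2 * nS)
      = (C:ℝ)⁻¹ * ((m:ℝ)^(C-1) * A) - (m:ℝ)^C * (((C:ℝ)*(m:ℝ))⁻¹)^2 * nS := by
    rw [mul_sub, ← mul_assoc, ← hA]; ring
  rw [expand]
  linarith [key]

lemma exists_multicoupling {k N : ℕ} (μ : Fin k → Fin N → ℝ)
    (hμ : ∀ i, IsProbVec (μ i)) : ∃ π, IsMulticoupling μ π := by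
  refine ⟨fun t => ∏ i, μ i (t i), fun t => Finset.prod_nonneg fun i _ => (hμ i).1 _, ?_, ?_⟩
  · rw [← Fintype.piFinset_univ, ← Finset.prod_univ_sum]
    exact Finset.prod_eq_one fun i _ => (hμ i).2
  · intro i j
    have hfil : Finset.univ.filter (fun t : Fin k → Fin N => t i = j)
        = Fintype.piFinset (Function.update (fun _ : Fin k => (Finset.univ : Finset (Fin N))) i {j}) := by
      ext t
      simp only [Finset.mem_filter, Finset.mem_univ, true_and, Fintype.mem_piFinset]
      constructor
      · intro h m
        by_cases hmi : m = i
        · subst hmi; simp [Function.update_self, h]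
        · simp [Function.update_of_ne hmi]
      · intro h
        have := h i
        simpa [Function.update_self] using this
    rw [hfil, ← Finset.prod_univ_sum]
    rw [Finset.prod_eq_single_of_mem i (Finset.mem_univ i) ?_]
    · simp [Function.update_self]
    · intro m _ hmi
      rw [Function.update_of_ne hmi]
      exact (hμ m).2

lemma mot_set_bddBelow {d k N : ℕ} (x : Fin N → EuclideanSpace ℝ (Fin d))
    (μ : Fin k → Fin N → ℝ) :
    BddBelow {v | ∃ π, IsMulticoupling μ π ∧ v = ∑ t, motCost x t * π t} := by
  refine ⟨0, fun v hv => ?_⟩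
  obtain ⟨π, hπ, rfl⟩ := hv
  exact Finset.sum_nonneg fun t _ => mul_nonneg (motCost_nonneg x t) (hπ.1 t)

lemma mot_set_nonempty {d k N : ℕ} (x : Fin N → EuclideanSpace ℝ (Fin d))
    (μ : Fin k → Fin N → ℝ) (hμ : ∀ i, IsProbVec (μ i)) :
    {v | ∃ π, IsMulticoupling μ π ∧ v = ∑ t, motCost x t * π t}.Nonempty := by
  obtain ⟨π, hπ⟩ := exists_multicoupling μ hμ
  exact ⟨_, π, hπ, rfl⟩

lemma MOT_clustered_eq {d C m N : ℕ} (hC : 0 < C) (hm : 0 < m)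
    (x : Fin N → EuclideanSpace ℝ (Fin d))
    (μ : Fin (C * m) → Fin N → ℝ) (ν : Fin C → Fin N → ℝ)
    (hμ : ∀ i, IsProbVec (μ i)) (hν : ∀ c, IsProbVec (ν c))
    (hblock : ∀ i, μ i = ν (blockOf i)) :
    MOT x μ = MOT x ν := by
  set liftB : (Fin C → Fin N) → (Fin (C * m) → Fin N) := fun s i => s (blockOf i) with hliftB
  have le1 : MOT x μ ≤ MOT x ν := by
    apply csInf_le_csInf (mot_set_bddBelow x μ) (mot_set_nonempty x ν hν)
    rintro v ⟨π, ⟨hπ0, hπ1, hπm⟩, rfl⟩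
    refine ⟨fun t => ∑ s ∈ univ.filter (fun s => liftB s = t), π s, ⟨?_, ?_, ?_⟩, ?_⟩
    · exact fun t => Finset.sum_nonneg fun s _ => hπ0 s
    · rw [Finset.sum_fiberwise univ liftB π]; exact hπ1
    · intro i j
      have hmaps : ∀ s ∈ univ.filter (fun s : Fin C → Fin N => s (blockOf i) = j),
          liftB s ∈ univ.filter (fun t : Fin (C * m) → Fin N => t i = j) := by
        intro s hs
        simp only [mem_filter, mem_univ, true_and] at hs ⊢
        exact hs
      have hfib := Finset.sum_fiberwise_of_maps_to hmaps π
      have hswap : ∀ t ∈ univ.filter (fun t : Fin (C * m) → Fin N => t i = j),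
          ∑ s ∈ univ.filter (fun s => liftB s = t), π s
            = ∑ s ∈ (univ.filter (fun s : Fin C → Fin N => s (blockOf i) = j)).filter
                (fun s => liftB s = t), π s := by
        intro t ht
        congr 1
        ext s
        simp only [mem_filter, mem_univ, true_and] at ht ⊢
        constructor
        · intro h; refine ⟨?_, h⟩; rw [← h] at ht; exact ht
        · exact fun h => h.2
      rw [Finset.sum_congr rfl hswap, hfib, hπm, hblock]
    · symm
      calc ∑ t, motCost x t * ∑ s ∈ univ.filter (fun s => liftB s = t), π s
          = ∑ t, ∑ s ∈ univ.filter (fun s => liftB s = t), motCost x (liftB s) * π s := by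
            refine Finset.sum_congr rfl fun t _ => ?_
            rw [Finset.mul_sum]
            exact Finset.sum_congr rfl fun s hs => by
              rw [(Finset.mem_filter.mp hs).2]
        _ = ∑ s, motCost x (liftB s) * π s :=
            Finset.sum_fiberwise univ liftB (fun s => motCost x (liftB s) * π s)
        _ = ∑ s, motCost x s * π s :=
            Finset.sum_congr rfl fun s _ => by rw [hliftB]; rw [motCost_lift hC hm]
      
  have le2 : MOT x ν ≤ MOT x μ := by
    apply le_csInf (mot_set_nonempty x μ hμ)
    rintro v ⟨π, ⟨hπ0, hπ1, hπm⟩, rfl⟩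
    set sel : (Fin C → Fin m) → (Fin (C * m) → Fin N) → (Fin C → Fin N) :=
      fun f t c => t (embB c (f c)) with hsel
    have hmpos : (0:ℝ) < (m : ℝ) ^ C := by positivity
    set ρ : (Fin C → Fin N) → ℝ :=
      fun s => ((m : ℝ) ^ C)⁻¹ * ∑ f : Fin C → Fin m,
        ∑ t ∈ univ.filter (fun t => sel f t = s), π t with hρ
    have hcard : ∑ _f : Fin C → Fin m, (1:ℝ) = (m : ℝ) ^ C := by
      rw [Finset.sum_const, Finset.card_univ, Fintype.card_fun, Fintype.card_fin,
        Fintype.card_fin, nsmul_eq_mul, mul_one]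
      push_cast; rfl
    refine csInf_le_of_le (mot_set_bddBelow x ν) ⟨ρ, ⟨?_, ?_, ?_⟩, rfl⟩ ?_
    · intro s
      exact mul_nonneg (by positivity) (Finset.sum_nonneg fun f _ =>
        Finset.sum_nonneg fun t _ => hπ0 t)
    · rw [← Finset.mul_sum, Finset.sum_comm]
      rw [Finset.sum_congr rfl fun f _ => Finset.sum_fiberwise univ (sel f) π]
      rw [Finset.sum_congr rfl fun f (_ : f ∈ univ) => hπ1, hcard]
      exact inv_mul_cancel₀ hmpos.ne'
    · intro c j
      rw [← Finset.mul_sum, Finset.sum_comm]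
      have inner : ∀ f : Fin C → Fin m,
          ∑ s ∈ univ.filter (fun s : Fin C → Fin N => s c = j),
            ∑ t ∈ univ.filter (fun t => sel f t = s), π t
          = ν c j := by
        intro f
        have hmaps : ∀ t ∈ univ.filter
            (fun t : Fin (C * m) → Fin N => t (embB c (f c)) = j),
            sel f t ∈ univ.filter (fun s : Fin C → Fin N => s c = j) := by
          intro t ht
          simp only [mem_filter, mem_univ, true_and] at ht ⊢
          exact ht
        have hfib := Finset.sum_fiberwise_of_maps_to hmaps π
        have hswap : ∀ s ∈ univ.filter (fun s : Fin C → Fin N => s c = j),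
            ∑ t ∈ univ.filter (fun t => sel f t = s), π t
              = ∑ t ∈ (univ.filter
                  (fun t : Fin (C * m) → Fin N => t (embB c (f c)) = j)).filter
                  (fun t => sel f t = s), π t := by
          intro s hs
          congr 1
          ext tt
          simp only [mem_filter, mem_univ, true_and] at hs ⊢
          constructor
          · intro h; exact ⟨(congrFun h c).trans hs, h⟩
          · exact fun h => h.2
        rw [Finset.sum_congr rfl hswap, hfib, hπm]
        rw [hblock (embB c (f c)), blockOf_embB]
      rw [Finset.sum_congr rfl fun f (_ : f ∈ univ) => inner f, Finset.sum_const,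
        Finset.card_univ, Fintype.card_fun, Fintype.card_fin, Fintype.card_fin,
        nsmul_eq_mul, ← mul_assoc]
      rw [show ((m:ℝ)^C)⁻¹ * ((m^C : ℕ) : ℝ) = 1 by push_cast; exact inv_mul_cancel₀ hmpos.ne',
        one_mul]
    · -- cost inequality
      have e1 : ∑ s, motCost x s * ρ s
          = ((m:ℝ)^C)⁻¹ * ∑ s, motCost x s * ∑ f : Fin C → Fin m,
              ∑ t ∈ univ.filter (fun t => sel f t = s), π t := by
        rw [Finset.mul_sum]
        exact Finset.sum_congr rfl fun s _ => by rw [hρ]; ring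
      have e2 : ∑ s, motCost x s * ∑ f : Fin C → Fin m,
            ∑ t ∈ univ.filter (fun t => sel f t = s), π t
          = ∑ f : Fin C → Fin m, ∑ t, motCost x (sel f t) * π t := by
        simp_rw [Finset.mul_sum]
        rw [Finset.sum_comm]
        refine Finset.sum_congr rfl fun f _ => ?_
        calc ∑ s, ∑ t ∈ univ.filter (fun t => sel f t = s), motCost x s * π t
            = ∑ s, ∑ t ∈ univ.filter (fun t => sel f t = s), motCost x (sel f t) * π t :=
              Finset.sum_congr rfl fun s _ => Finset.sum_congr rfl fun t ht => by
                rw [(Finset.mem_filter.mp ht).2]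
          _ = ∑ t, motCost x (sel f t) * π t :=
              Finset.sum_fiberwise univ (sel f) (fun t => motCost x (sel f t) * π t)
      calc ∑ s, motCost x s * ρ s
          = ((m:ℝ)^C)⁻¹ * ∑ f : Fin C → Fin m, ∑ t, motCost x (sel f t) * π t := by
            rw [e1, e2]
        _ = ((m:ℝ)^C)⁻¹ * ∑ t, (∑ f : Fin C → Fin m, motCost x (sel f t)) * π t := by
            rw [Finset.sum_comm]
            congr 1
            exact Finset.sum_congr rfl fun t _ => (Finset.sum_mul _ _ _).symm
        _ ≤ ((m:ℝ)^C)⁻¹ * ∑ t, ((m:ℝ)^C * motCost x t) * π t := by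
            refine mul_le_mul_of_nonneg_left ?_ (inv_nonneg.mpr hmpos.le)
            refine Finset.sum_le_sum fun t _ => ?_
            exact mul_le_mul_of_nonneg_right (avg_cost_le hC hm x t) (hπ0 t)
        _ = ∑ t, motCost x t * π t := by
            rw [Finset.mul_sum]
            refine Finset.sum_congr rfl fun t _ => ?_
            field_simp
  linarith

lemma motCost_two {d N : ℕ} (x : Fin N → EuclideanSpace ℝ (Fin d))
    (t : Fin 2 → Fin N) :
    motCost x t = (1 / 4 : ℝ) * ‖x (t 0) - x (t 1)‖ ^ 2 := by
  unfold motCost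
  rw [Fin.sum_univ_two, Fin.sum_univ_two]
  have e0 : x (t 0) - (2 : ℝ)⁻¹ • (x (t 0) + x (t 1))
      = (2 : ℝ)⁻¹ • (x (t 0) - x (t 1)) := by module
  have e1 : x (t 1) - (2 : ℝ)⁻¹ • (x (t 0) + x (t 1))
      = (2 : ℝ)⁻¹ • (x (t 1) - x (t 0)) := by module
  push_cast
  rw [e0, e1, norm_smul, norm_smul, Real.norm_eq_abs, mul_pow, mul_pow, sq_abs,
    norm_sub_rev (x (t 1))]
  norm_num
  ring

lemma sum_fin2 {N : ℕ} {β : Type*} [AddCommMonoid β] (F : (Fin 2 → Fin N) → β) :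
    ∑ t, F t = ∑ j, ∑ l, F ![j, l] := by
  have h := Fintype.sum_equiv ((piFinTwoEquiv (fun _ => Fin N)).symm)
    (fun p : Fin N × Fin N => F ![p.1, p.2]) F
    (fun p => by congr 1)
  rw [← h, Fintype.sum_prod_type]

lemma marg_fin2_left {N : ℕ} (π : (Fin 2 → Fin N) → ℝ) (j : Fin N) :
    ∑ t ∈ Finset.univ.filter (fun t : Fin 2 → Fin N => t 0 = j), π t = ∑ l, π ![j, l] := by
  rw [Finset.sum_filter, sum_fin2 (fun t => if t 0 = j then π t else 0)]
  simp only [Matrix.cons_val_zero]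
  rw [Finset.sum_comm]
  refine Finset.sum_congr rfl fun l _ => ?_
  exact (Finset.sum_ite_eq' univ j (fun x => π ![x, l])).trans (if_pos (mem_univ j))

lemma marg_fin2_right {N : ℕ} (π : (Fin 2 → Fin N) → ℝ) (l : Fin N) :
    ∑ t ∈ Finset.univ.filter (fun t : Fin 2 → Fin N => t 1 = l), π t = ∑ j, π ![j, l] := by
  rw [Finset.sum_filter, sum_fin2 (fun t => if t 1 = l then π t else 0)]
  simp only [Matrix.cons_val_one, Matrix.head_cons]
  refine Finset.sum_congr rfl fun j _ => ?_
  simp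

lemma MOT_two {d N : ℕ} (x : Fin N → EuclideanSpace ℝ (Fin d))
    (ν : Fin 2 → Fin N → ℝ) :
    MOT x ν = (1 / 4 : ℝ) * W2sq x (ν 0) (ν 1) := by
  have hset : {v | ∃ π, IsMulticoupling ν π ∧ v = ∑ t, motCost x t * π t}
      = (1 / 4 : ℝ) • {v | ∃ γ : Fin N → Fin N → ℝ,
        (∀ j l, 0 ≤ γ j l) ∧ (∑ j, ∑ l, γ j l = 1) ∧
        (∀ j, ∑ l, γ j l = (ν 0) j) ∧ (∀ l, ∑ j, γ j l = (ν 1) l) ∧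
        v = ∑ j, ∑ l, ‖x j - x l‖ ^ 2 * γ j l} := by
    ext v
    constructor
    · rintro ⟨π, ⟨hπ0, hπ1, hπm⟩, rfl⟩
      refine Set.mem_smul_set.mpr ⟨∑ j, ∑ l, ‖x j - x l‖ ^ 2 * π ![j, l],
        ⟨fun j l => π ![j, l], fun j l => hπ0 _, ?_, ?_, ?_, rfl⟩, ?_⟩
      · rw [← sum_fin2 π]; exact hπ1
      · intro j; rw [← marg_fin2_left π j]; exact hπm 0 j
      · intro l; rw [← marg_fin2_right π l]; exact hπm 1 l
      · rw [smul_eq_mul, Finset.mul_sum, sum_fin2 (fun t => motCost x t * π t)]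
        refine Finset.sum_congr rfl fun j _ => ?_
        rw [Finset.mul_sum]
        refine Finset.sum_congr rfl fun l _ => ?_
        rw [motCost_two]
        simp only [Matrix.cons_val_zero, Matrix.cons_val_one, Matrix.head_cons]
        ring
    · intro hv
      obtain ⟨w, ⟨γ, hγ0, hγ1, hγl, hγr, rfl⟩, rfl⟩ := Set.mem_smul_set.mp hv
      refine ⟨fun t => γ (t 0) (t 1), ⟨fun t => hγ0 _ _, ?_, ?_⟩, ?_⟩
      · rw [sum_fin2 (fun t => γ (t 0) (t 1))]
        simpa using hγ1
      · intro i j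
        have h2 : ∀ i : Fin 2, i = 0 ∨ i = 1 := by decide
        rcases h2 i with rfl | rfl
        · rw [marg_fin2_left (fun t => γ (t 0) (t 1)) j]
          simpa using hγl j
        · rw [marg_fin2_right (fun t => γ (t 0) (t 1)) j]
          simpa using hγr j
      · rw [smul_eq_mul, Finset.mul_sum, sum_fin2 (fun t => motCost x t * γ (t 0) (t 1))]
        refine Finset.sum_congr rfl fun j _ => ?_
        rw [Finset.mul_sum]
        refine Finset.sum_congr rfl fun l _ => ?_
        rw [motCost_two]
        simp only [Matrix.cons_val_zero, Matrix.cons_val_one, Matrix.head_cons]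
        ring
  rw [MOT, hset, Real.sInf_smul_of_nonneg (by norm_num), W2sq, smul_eq_mul]

/-- `MOT` values for "clustered" alternatives.  If the collection
`(μ_1,…,μ_k)` consists of `C` blocks of `k/C` identical measures (block `c`
equal to `ν_c`), then `MOT(μ_1,…,μ_k) = MOT(ν_1,…,ν_C)`.  In particular, for
`C = 2`, `MOT(μ_1,…,μ_k) = (1/4)·W₂²(ν_1, ν_2)`. -/
theorem mot_clustered {d k C N : ℕ} (hC : 2 ≤ C) (hk : 0 < k) (hdvd : C ∣ k)
    (x : Fin N → EuclideanSpace ℝ (Fin d)) (hx : Function.Injective x)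
    (μ : Fin k → Fin N → ℝ) (ν : Fin C → Fin N → ℝ)
    (hμ : ∀ i, IsProbVec (μ i)) (hν : ∀ c, IsProbVec (ν c))
    (hblock : ∀ (i : Fin k) (c : Fin C), (i : ℕ) / (k / C) = (c : ℕ) → μ i = ν c) :
    MOT x μ = MOT x ν ∧
    (C = 2 → MOT x μ = (1 / 4 : ℝ) * W2sq x (ν ⟨0, by omega⟩) (ν ⟨1, by omega⟩)) := by
  have hC0 : 0 < C := by omega
  obtain ⟨m, rfl⟩ := hdvd
  have hm : 0 < m := by
    rcases Nat.eq_zero_or_pos m with h | h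
    · subst h; simp at hk
    · exact h
  have hblock' : ∀ i : Fin (C * m), μ i = ν (blockOf i) := by
    intro i
    apply hblock i (blockOf i)
    show (i : ℕ) / (C * m / C) = (i : ℕ) / m
    rw [Nat.mul_div_cancel_left _ hC0]
  have h1 : MOT x μ = MOT x ν := MOT_clustered_eq hC0 hm x μ ν hμ hν hblock'
  refine ⟨h1, fun h2 => ?_⟩
  subst h2
  rw [h1]
  exact MOT_two x ν
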